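/- For every natural number d and reals K, c ≥ 1, sqrt(p_{Kc}(d)) ≤ e^{Kc/2} · sqrt(Kc) · p_{Kc}(floor(d/2)), where p_λ(d) = e^{-λ} λ^d / d! is the Poisson pmf with parameter λ. -/

import Mathlib

theorem sqrt_poisson_pmf_le (d : ℕ) (K c : ℝ) (hK : 1 ≤ K) (hc : 1 ≤ c) :
    Real.sqrt (Real.exp (-(K * c)) * (K * c) ^ d / (Nat.factorial d)) ≤
      Real.exp (K * c / 2) * Real.sqrt (K * c) *
        (Real.exp (-(K * c)) * (K * c) ^ (d / 2) / (Nat.factorial (d / 2))) := by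
  set l := K * c with hl
  have hl1 : (1:ℝ) ≤ l := by nlinarith
  have hl0 : (0:ℝ) ≤ l := by linarith
  set m := d / 2 with hm
  have hRHS0 : 0 ≤ Real.exp (l/2) * Real.sqrt l * (Real.exp (-l) * l ^ m / (Nat.factorial m)) := by
    positivity
  rw [← Real.sqrt_sq hRHS0]
  apply Real.sqrt_le_sqrt
  have hfac : ((Nat.factorial m : ℝ)) * (Nat.factorial m) ≤ (Nat.factorial d) := by
    have h1 : Nat.factorial m * Nat.factorial m ≤ Nat.factorial (m + m) :=
      Nat.le_of_dvd (Nat.factorial_pos _) (Nat.factorial_mul_factorial_dvd_factorial_add m m)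
    have h2 : Nat.factorial (m + m) ≤ Nat.factorial d := Nat.factorial_le (by omega)
    exact_mod_cast h1.trans h2
  have hpow : l ^ d ≤ l ^ (2 * m + 1) := pow_le_pow_right₀ hl1 (by omega)
  have hsq : Real.sqrt l ^ 2 = l := Real.sq_sqrt hl0
  have hfd : (0:ℝ) < Nat.factorial d := by positivity
  have hfm : (0:ℝ) < Nat.factorial m := by positivity
  have hexp : Real.exp (l/2) ^ 2 * Real.exp (-l) ^ 2 = Real.exp (-l) := by
    rw [← Real.exp_nat_mul, ← Real.exp_nat_mul, ← Real.exp_add]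
    ring_nf
  have hrhs : (Real.exp (l/2) * Real.sqrt l * (Real.exp (-l) * l ^ m / (Nat.factorial m))) ^ 2
      = Real.exp (-l) * l ^ (2 * m + 1) / ((Nat.factorial m) * (Nat.factorial m)) := by
    rw [mul_pow, mul_pow, div_pow, mul_pow, hsq]
    rw [pow_add, pow_mul, pow_one]
    linear_combination (l * (l ^ m) ^ 2 / ((Nat.factorial m : ℝ) * (Nat.factorial m))) * hexp
  rw [hrhs, div_le_div_iff₀ hfd (by positivity)]
  have hexp0 : (0:ℝ) < Real.exp (-l) := Real.exp_pos _
  have hld : (0:ℝ) ≤ l ^ d := by positivity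
  nlinarith [mul_le_mul hpow hfac (by positivity) (by positivity : (0:ℝ) ≤ l ^ (2*m+1))]
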